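/- If α : F ⇒ G is a natural transformation with injective components and G is a cancellative Set-functor, then F is cancellative. In particular, cancellative functors are closed under subfunctors. -/

import Mathlib

open CategoryTheory

/-- Characteristic function of {1,2} ⊆ 3. -/
def chi12 : Fin 3 → Fin 2 := fun t => if t = 0 then 0 else 1

/-- Characteristic function of {2} ⊆ 3. -/
def chi2 : Fin 3 → Fin 2 := fun t => if t = 2 then 1 else 0

/-- A Set-functor is cancellative if ⟨F χ_{1,2}, F χ_{2}⟩ : F3 → F2 × F2 is injective. -/
def Cancellative (F : Type ⥤ Type) : Prop :=
  Function.Injective fun t : F.obj (Fin 3) => (F.map (TypeCat.ofHom chi12) t, F.map (TypeCat.ofHom chi2) t)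

theorem stmt7 (F G : Type ⥤ Type) (α : F ⟶ G)
    (hα : ∀ X : Type, Function.Injective (α.app X))
    (hG : Cancellative G) : Cancellative F := by
  intro x y h
  simp only [Prod.mk.injEq] at h
  apply hα (Fin 3)
  apply hG
  simp only [Prod.mk.injEq]
  have n1 := fun t => FunctorToTypes.naturality (F := F) (G := G) (φ := α) (f := TypeCat.ofHom chi12) (x := t)
  have n2 := fun t => FunctorToTypes.naturality (F := F) (G := G) (φ := α) (f := TypeCat.ofHom chi2) (x := t)
  constructor
  · rw [← n1, ← n1, h.1]
  · rw [← n2, ← n2, h.2]
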